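/- Let x be a complex symmetric m×m matrix with ‖x‖ < 1 (operator norm), and set Γ = √(I - x* x). Then the 2m×2m matrix A = [[x, Γ^T],[Γ, -x*]] is symmetric and unitary. -/

import Mathlib

open Matrix
open scoped ComplexOrder

/-- The positive semidefinite square root of a positive semidefinite matrix
(the Mathlib definition of December 2024, since removed from Mathlib). -/
noncomputable def Matrix.PosSemidef.sqrt {n 𝕜 : Type*} [Fintype n] [RCLike 𝕜] [DecidableEq n]
    {A : Matrix n n 𝕜} (hA : A.PosSemidef) : Matrix n n 𝕜 :=
  hA.1.eigenvectorUnitary.1 * diagonal ((↑) ∘ (√·) ∘ hA.1.eigenvalues) *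
  (star hA.1.eigenvectorUnitary : Matrix n n 𝕜)

theorem psd_sqrt_posSemidef_aux {n 𝕜 : Type*} [Fintype n] [RCLike 𝕜] [DecidableEq n]
    {A : Matrix n n 𝕜} (hA : A.PosSemidef) : hA.sqrt.PosSemidef := by
  have hD : (diagonal ((↑) ∘ (√·) ∘ hA.1.eigenvalues) : Matrix n n 𝕜).PosSemidef := by
    rw [posSemidef_diagonal_iff]
    intro i
    simp only [Function.comp]
    exact_mod_cast Real.sqrt_nonneg _
  have := hD.mul_mul_conjTranspose_same (hA.1.eigenvectorUnitary : Matrix n n 𝕜)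
  unfold Matrix.PosSemidef.sqrt
  rw [Matrix.star_eq_conjTranspose]
  exact this

theorem psd_sqrt_mul_self_aux {n 𝕜 : Type*} [Fintype n] [RCLike 𝕜] [DecidableEq n]
    {A : Matrix n n 𝕜} (hA : A.PosSemidef) : hA.sqrt * hA.sqrt = A := by
  have hUU : (star hA.1.eigenvectorUnitary : Matrix n n 𝕜) * hA.1.eigenvectorUnitary = 1 :=
    Unitary.coe_star_mul_self _
  have hs := hA.1.spectral_theorem
  rw [Unitary.conjStarAlgAut_apply] at hs
  have hD : (diagonal ((↑) ∘ (√·) ∘ hA.1.eigenvalues) : Matrix n n 𝕜) *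
      diagonal ((↑) ∘ (√·) ∘ hA.1.eigenvalues) = diagonal (RCLike.ofReal ∘ hA.1.eigenvalues) := by
    rw [diagonal_mul_diagonal]
    congr 1
    funext i
    simp only [Function.comp]
    rw [← RCLike.ofReal_mul, Real.mul_self_sqrt (hA.eigenvalues_nonneg i)]
  conv_rhs => rw [hs]
  unfold Matrix.PosSemidef.sqrt
  rw [← hD]
  simp only [Matrix.mul_assoc]
  congr 1
  rw [← Matrix.mul_assoc (star hA.1.eigenvectorUnitary : Matrix n n 𝕜), hUU, Matrix.one_mul]

open Polynomial in
theorem intertwine_aeval_aux {n : ℕ} (x M N : Matrix (Fin n) (Fin n) ℂ) (h : x * M = N * x)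
    (p : ℂ[X]) : x * Polynomial.aeval M p = Polynomial.aeval N p * x := by
  induction p using Polynomial.induction_on with
  | C a => simp [Algebra.commutes]
  | add p q hp hq => simp [mul_add, add_mul, hp, hq]
  | monomial k a ih =>
    have e : (C a * X ^ (k + 1)) = (C a * X ^ k) * X := by ring
    rw [e, _root_.map_mul (Polynomial.aeval M) (C a * X ^ k) X, aeval_X, ← mul_assoc, ih,
      mul_assoc, h, ← mul_assoc, _root_.map_mul (Polynomial.aeval N) (C a * X ^ k) X, aeval_X]

open Polynomial in
theorem aeval_conj_diag_aux {n : ℕ} (U : Matrix (Fin n) (Fin n) ℂ)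
    (hU : U ∈ Matrix.unitaryGroup (Fin n) ℂ) (d : Fin n → ℂ) (p : ℂ[X]) :
    Polynomial.aeval (U * Matrix.diagonal d * star U) p
      = U * Matrix.diagonal (fun i => p.eval (d i)) * star U := by
  have hUU : U * star U = 1 := (Matrix.mem_unitaryGroup_iff).mp hU
  have hUU' : star U * U = 1 := (Matrix.mem_unitaryGroup_iff').mp hU
  induction p using Polynomial.induction_on with
  | C a =>
    simp only [aeval_C, eval_C]
    have h1 : (Matrix.diagonal fun _ : Fin n => a) = a • (1 : Matrix (Fin n) (Fin n) ℂ) := by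
      rw [Matrix.smul_one_eq_diagonal]
    rw [Algebra.algebraMap_eq_smul_one, h1, Matrix.mul_smul, Matrix.smul_mul, mul_one, hUU]
  | add p q hp hq =>
    have h2 : (Matrix.diagonal fun i => eval (d i) p + eval (d i) q)
        = Matrix.diagonal (fun i => eval (d i) p) + Matrix.diagonal (fun i => eval (d i) q) := by
      rw [← Matrix.diagonal_add]
    simp only [_root_.map_add, eval_add, hp, hq, h2, Matrix.add_mul, Matrix.mul_add]
  | monomial k a ih =>
    have e : (C a * X ^ (k + 1)) = (C a * X ^ k) * X := by ring
    rw [e, _root_.map_mul, aeval_X, ih]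
    have h3 : U * Matrix.diagonal (fun i => eval (d i) (C a * X ^ k)) * star U *
        (U * Matrix.diagonal d * star U)
        = U * (Matrix.diagonal (fun i => eval (d i) (C a * X ^ k)) * Matrix.diagonal d)
          * star U := by
      simp only [Matrix.mul_assoc]
      congr 1
      congr 1
      rw [← Matrix.mul_assoc, hUU', Matrix.one_mul]
    rw [h3, Matrix.diagonal_mul_diagonal]
    congr 2
    ext i
    simp [pow_succ, mul_assoc]

open Polynomial in
theorem aeval_interp_sqrt_aux {n : ℕ} {P : Matrix (Fin n) (Fin n) ℂ} (hP : P.PosSemidef)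
    (g : ℂ[X])
    (hg : ∀ i, g.eval (((hP.1.eigenvalues i : ℝ) : ℂ) ^ 2) = ((hP.1.eigenvalues i : ℝ) : ℂ)) :
    Polynomial.aeval (P * P) g = P := by
  have hU : (hP.1.eigenvectorUnitary : Matrix (Fin n) (Fin n) ℂ) ∈
      Matrix.unitaryGroup (Fin n) ℂ := SetLike.coe_mem _
  set U : Matrix (Fin n) (Fin n) ℂ := (hP.1.eigenvectorUnitary : Matrix (Fin n) (Fin n) ℂ)
  set d : Fin n → ℂ := fun i => ((hP.1.eigenvalues i : ℝ) : ℂ) with hd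
  have hPd : P = U * Matrix.diagonal d * star U := by
    have := hP.1.spectral_theorem
    rw [Unitary.conjStarAlgAut_apply] at this
    exact this
  have hPP : P * P = U * Matrix.diagonal (fun i => d i ^ 2) * star U := by
    have h := aeval_conj_diag_aux U hU d (X ^ 2)
    rw [map_pow, aeval_X, sq] at h
    rw [hPd, h]
    congr 1
    congr 1
    ext i
    simp
  rw [hPP, aeval_conj_diag_aux U hU _ g]
  have : (fun i => g.eval (d i ^ 2)) = d := by
    funext i
    exact hg i
  rw [this, ← hPd]

open Polynomial in
theorem interp_sqrt_vals_aux (s : Finset ℝ) (hsnn : ∀ t ∈ s, 0 ≤ t) :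
    ∃ g : ℂ[X], ∀ t ∈ s, g.eval ((t : ℂ) ^ 2) = (t : ℂ) := by
  have hinj : Set.InjOn (fun t : ℝ => t ^ 2) s := by
    intro a ha b hb hab
    simp only at hab
    rw [← Real.sqrt_sq (hsnn a ha), ← Real.sqrt_sq (hsnn b hb), hab]
  refine ⟨(Lagrange.interpolate s (fun t : ℝ => t ^ 2) id).map (algebraMap ℝ ℂ), fun t ht => ?_⟩
  have h1 := Lagrange.eval_interpolate_at_node (v := fun t : ℝ => t ^ 2) (r := id) hinj ht
  simp only [id_eq] at h1
  have h2 : ((t : ℂ)) ^ 2 = ((t ^ 2 : ℝ) : ℂ) := by norm_cast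
  rw [h2, Polynomial.eval_map, ← Complex.coe_algebraMap, Polynomial.eval₂_at_apply, h1,
    Complex.coe_algebraMap]

open Polynomial in
theorem exists_common_sqrt_poly_aux {n : ℕ} {P Q : Matrix (Fin n) (Fin n) ℂ}
    (hP : P.PosSemidef) (hQ : Q.PosSemidef) :
    ∃ g : ℂ[X], Polynomial.aeval (P * P) g = P ∧ Polynomial.aeval (Q * Q) g = Q := by
  obtain ⟨g, hgval⟩ := interp_sqrt_vals_aux
    ((Finset.univ.image hP.1.eigenvalues) ∪ (Finset.univ.image hQ.1.eigenvalues)) (by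
      intro t ht
      rw [Finset.mem_union] at ht
      rcases ht with ht | ht <;> rw [Finset.mem_image] at ht <;> obtain ⟨i, -, rfl⟩ := ht
      · exact hP.eigenvalues_nonneg i
      · exact hQ.eigenvalues_nonneg i)
  refine ⟨g, aeval_interp_sqrt_aux hP g fun i => ?_, aeval_interp_sqrt_aux hQ g fun i => ?_⟩
  · exact hgval _ (Finset.mem_union_left _ (Finset.mem_image_of_mem _ (Finset.mem_univ i)))
  · exact hgval _ (Finset.mem_union_right _ (Finset.mem_image_of_mem _ (Finset.mem_univ i)))

/-- For complex symmetric `x` with operator norm `‖x‖ < 1` and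
`Γ = √(I - x* x)` (the positive semidefinite square root), the matrix
`A = [[x, Γᵀ],[Γ, -x*]]` is symmetric and unitary. -/
theorem symmetric_unitary_completion {m : ℕ}
    (x : Matrix (Fin m) (Fin m) ℂ) (hx : xᵀ = x)
    (hnorm : ‖Matrix.toEuclideanCLM (𝕜 := ℂ) x‖ < 1)
    (hpsd : ((1 : Matrix (Fin m) (Fin m) ℂ) - x.map (starRingEnd ℂ) * x).PosSemidef) :
    (Matrix.fromBlocks x hpsd.sqrtᵀ hpsd.sqrt (-(x.map (starRingEnd ℂ))))ᵀ =
      Matrix.fromBlocks x hpsd.sqrtᵀ hpsd.sqrt (-(x.map (starRingEnd ℂ))) ∧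
    (Matrix.fromBlocks x hpsd.sqrtᵀ hpsd.sqrt (-(x.map (starRingEnd ℂ))))ᴴ *
      Matrix.fromBlocks x hpsd.sqrtᵀ hpsd.sqrt (-(x.map (starRingEnd ℂ))) = 1 := by
  set cx : Matrix (Fin m) (Fin m) ℂ := x.map (starRingEnd ℂ) with hcx
  set Γ : Matrix (Fin m) (Fin m) ℂ := hpsd.sqrt with hΓdef
  have hΓ : Γ.PosSemidef := psd_sqrt_posSemidef_aux hpsd
  have hB : Γᵀ.PosSemidef := hΓ.transpose
  have hsym : ∀ i j, x j i = x i j := by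
    intro i j
    conv_lhs => rw [← Matrix.transpose_apply x i j, hx]
  have hcxT : cxᵀ = cx := by
    ext i j
    simp [hcx, Matrix.map_apply, hsym i j]
  have hxH : xᴴ = cx := by
    ext i j
    simp [Matrix.conjTranspose_apply, hcx, Matrix.map_apply, hsym i j]
  have hcxH : cxᴴ = x := by
    ext i j
    simp [Matrix.conjTranspose_apply, hcx, Matrix.map_apply, hsym i j]
  have hΓH : Γᴴ = Γ := hΓ.1
  have hBH : (Γᵀ)ᴴ = Γᵀ := hB.1
  have hΓmul : Γ * Γ = 1 - cx * x := psd_sqrt_mul_self_aux hpsd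
  have hBmul : Γᵀ * Γᵀ = 1 - x * cx := by
    rw [← Matrix.transpose_mul, hΓmul, Matrix.transpose_sub, Matrix.transpose_one,
      Matrix.transpose_mul, hcxT, hx]
  have hcomm : x * (1 - cx * x) = (1 - x * cx) * x := by noncomm_ring
  obtain ⟨g, hΓeq, hBeq⟩ := exists_common_sqrt_poly_aux hΓ hB
  have key : x * Γ = Γᵀ * x := by
    have h := intertwine_aeval_aux x (1 - cx * x) (1 - x * cx) hcomm g
    rw [← hΓmul, ← hBmul, hΓeq, hBeq] at h
    exact h
  have key2 : Γ * cx = cx * Γᵀ := by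
    have h := congrArg Matrix.conjTranspose key
    rw [Matrix.conjTranspose_mul, Matrix.conjTranspose_mul, hΓH, hxH, hBH] at h
    exact h
  constructor
  · rw [Matrix.fromBlocks_transpose, hx, Matrix.transpose_transpose, Matrix.transpose_neg, hcxT]
  · rw [Matrix.fromBlocks_conjTranspose, hxH, hΓH, hBH, Matrix.conjTranspose_neg, hcxH,
      Matrix.fromBlocks_multiply]
    have e1 : cx * x + Γ * Γ = 1 := by rw [hΓmul]; abel
    have e2 : cx * Γᵀ + Γ * -cx = 0 := by rw [Matrix.mul_neg, key2]; abel
    have e3 : Γᵀ * x + -x * Γ = 0 := by rw [Matrix.neg_mul, key]; abel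
    have e4 : Γᵀ * Γᵀ + -x * -cx = 1 := by
      rw [hBmul, Matrix.neg_mul, Matrix.mul_neg, neg_neg]; abel
    rw [e1, e2, e3, e4, Matrix.fromBlocks_one]
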